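/- Under the hypotheses of the previous theorem (q ≥ 1, |f'|^q preinvex): |(1/η(b,a)) ∫_a^{a+η(b,a)} f(x) dx − f((2a+η(b,a))/2)| ≤ (η(b,a)/8)·((2^{1/q} + 1)/3^{1/q})·(|f'(a)| + |f'(b)|). -/

import Mathlib

open MeasureTheory intervalIntegral

private lemma rpow_add_le_add_rpow_real {x y s : ℝ} (hx : 0 ≤ x) (hy : 0 ≤ y)
    (hs0 : 0 ≤ s) (hs1 : s ≤ 1) : (x + y) ^ s ≤ x ^ s + y ^ s := by
  lift x to NNReal using hx
  lift y to NNReal using hy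
  have h := NNReal.rpow_add_le_add_rpow x y hs0 hs1
  have h2 : ((x + y : NNReal) : ℝ) ^ s ≤ ((x : NNReal) : ℝ) ^ s + ((y : NNReal) : ℝ) ^ s := by
    rw [← NNReal.coe_rpow, ← NNReal.coe_rpow, ← NNReal.coe_rpow, ← NNReal.coe_add]
    exact_mod_cast h
  simpa using h2

private lemma abs_le_of_rpow_le {x C q : ℝ} (hq : 0 < q) (hx : 0 ≤ x) (h : x ^ q ≤ C) :
    x ≤ C ^ (1 / q) := by
  have h2 := Real.rpow_le_rpow (Real.rpow_nonneg hx q) h (by positivity : (0:ℝ) ≤ 1 / q)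
  rwa [← Real.rpow_mul hx, mul_one_div_cancel hq.ne', Real.rpow_one] at h2

private lemma integrableOn_Ioc_of_bound {u : ℝ → ℝ} {c d C : ℝ}
    (hu : Measurable u) (hC : ∀ t ∈ Set.Ioc c d, |u t| ≤ C) :
    IntegrableOn u (Set.Ioc c d) := by
  refine Measure.integrableOn_of_bounded (M := C) (ne_of_lt measure_Ioc_lt_top)
    hu.aestronglyMeasurable ?_
  refine (ae_restrict_iff' measurableSet_Ioc).2 (Filter.Eventually.of_forall ?_)
  intro t ht
  simpa [Real.norm_eq_abs] using hC t ht

private lemma poly_int (C D : ℝ) :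
    ∫ t in Set.Ioc (0:ℝ) (1/2 : ℝ), t * ((1 - t) * C + t * D) = C / 12 + D / 24 := by
  rw [← intervalIntegral.integral_of_le (by norm_num : (0:ℝ) ≤ 1/2)]
  have hd : ∀ t ∈ Set.uIcc (0:ℝ) (1/2 : ℝ),
      HasDerivAt (fun t : ℝ => C * (t ^ 2 / 2 - t ^ 3 / 3) + D * (t ^ 3 / 3))
        (t * ((1 - t) * C + t * D)) t := by
    intro t _
    have h2 : HasDerivAt (fun t : ℝ => t ^ 2) ((2:ℕ) * t ^ (2 - 1)) t := hasDerivAt_pow 2 t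
    have h3 : HasDerivAt (fun t : ℝ => t ^ 3) ((3:ℕ) * t ^ (3 - 1)) t := hasDerivAt_pow 3 t
    have h := (((h2.div_const 2).sub (h3.div_const 3)).const_mul C).add
      ((h3.div_const 3).const_mul D)
    exact h.congr_deriv (by push_cast; ring)
  rw [intervalIntegral.integral_eq_sub_of_hasDerivAt hd
    ((Continuous.intervalIntegrable (by fun_prop) _ _))]
  norm_num
  ring

private lemma key_half {g : ℝ → ℝ} (hgm : Measurable g) {A B q : ℝ} (hq : 1 ≤ q)
    (hA : 0 ≤ A) (hB : 0 ≤ B)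
    (hbound : ∀ t ∈ Set.Ioc (0:ℝ) (1/2 : ℝ), |g t| ^ q ≤ (1 - t) * A ^ q + t * B ^ q) :
    ∫ t in Set.Ioc (0:ℝ) (1/2 : ℝ), t * |g t| ≤
      1 / 8 * ((2:ℝ) ^ (1/q) * A + B) / (3:ℝ) ^ (1/q) := by
  have hq0 : (0:ℝ) < q := lt_of_lt_of_le one_pos hq
  have hq0' : q ≠ 0 := hq0.ne'
  have hAq : (0:ℝ) ≤ A ^ q := Real.rpow_nonneg hA q
  have hBq : (0:ℝ) ≤ B ^ q := Real.rpow_nonneg hB q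
  set M : ℝ := (A ^ q + B ^ q) ^ (1/q) with hMdef
  have hM0 : 0 ≤ M := Real.rpow_nonneg (by linarith) _
  have hgM : ∀ t ∈ Set.Ioc (0:ℝ) (1/2 : ℝ), |g t| ≤ M := by
    intro t ht
    refine abs_le_of_rpow_le hq0 (abs_nonneg _) ((hbound t ht).trans ?_)
    nlinarith [mul_nonneg ht.1.le hAq,
      mul_nonneg (by linarith [ht.2] : (0:ℝ) ≤ 1 - t) hBq]
  have hint_tg : IntegrableOn (fun t => t * |g t|) (Set.Ioc (0:ℝ) (1/2 : ℝ)) := by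
    refine integrableOn_Ioc_of_bound (measurable_id.mul hgm.abs) (C := M) ?_
    intro t ht
    rw [abs_mul, abs_abs, abs_of_pos ht.1]
    nlinarith [mul_nonneg ht.1.le (sub_nonneg.2 (hgM t ht)),
      mul_nonneg (by linarith [ht.2] : (0:ℝ) ≤ 1 - t) hM0]
  have hsq0 : (0:ℝ) ≤ 1/q := by positivity
  have hsq1 : 1/q ≤ 1 := by rw [div_le_one hq0]; exact hq
  rcases eq_or_lt_of_le hq with hq1 | hq1
  · -- q = 1
    subst hq1
    simp only [Real.rpow_one] at hbound
    have hmono : ∫ t in Set.Ioc (0:ℝ) (1/2 : ℝ), t * |g t| ≤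
        ∫ t in Set.Ioc (0:ℝ) (1/2 : ℝ), t * ((1 - t) * A + t * B) := by
      refine setIntegral_mono_on hint_tg (Continuous.integrableOn_Ioc (by fun_prop))
        measurableSet_Ioc fun t ht => ?_
      exact mul_le_mul_of_nonneg_left (hbound t ht) ht.1.le
    rw [poly_int] at hmono
    have h2 : ((2:ℝ)) ^ ((1:ℝ)/1) = 2 := by norm_num
    have h3 : ((3:ℝ)) ^ ((1:ℝ)/1) = 3 := by norm_num
    rw [h2, h3]
    linarith
  · -- q > 1
    set p := Real.conjExponent q with hpdef
    have hpq : p.HolderConjugate q := (Real.HolderConjugate.conjExponent hq1).symm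
    have hp0 : 0 < p := hpq.pos
    have hsum1 : 1/p + 1/q = 1 := by rw [one_div, one_div]; exact hpq.inv_add_inv_eq_one
    have hmF : Measurable (fun t : ℝ => t ^ (1/p : ℝ)) := by fun_prop
    have hmG : Measurable (fun t : ℝ => t ^ (1/q : ℝ) * |g t|) := by fun_prop
    have haeF : 0 ≤ᵐ[volume.restrict (Set.Ioc (0:ℝ) (1/2 : ℝ))]
        (fun t : ℝ => t ^ (1/p : ℝ)) :=
      (ae_restrict_iff' measurableSet_Ioc).2
        (Filter.Eventually.of_forall fun t ht => Real.rpow_nonneg ht.1.le _)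
    have haeG : 0 ≤ᵐ[volume.restrict (Set.Ioc (0:ℝ) (1/2 : ℝ))]
        (fun t : ℝ => t ^ (1/q : ℝ) * |g t|) :=
      (ae_restrict_iff' measurableSet_Ioc).2
        (Filter.Eventually.of_forall fun t ht =>
          mul_nonneg (Real.rpow_nonneg ht.1.le _) (abs_nonneg _))
    have hFmem : MemLp (fun t : ℝ => t ^ (1/p : ℝ)) (ENNReal.ofReal p)
        (volume.restrict (Set.Ioc (0:ℝ) (1/2 : ℝ))) := by
      refine MemLp.of_bound hmF.aestronglyMeasurable 1 ?_
      refine (ae_restrict_iff' measurableSet_Ioc).2 (Filter.Eventually.of_forall fun t ht => ?_)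
      rw [Real.norm_eq_abs, abs_of_nonneg (Real.rpow_nonneg ht.1.le _)]
      exact Real.rpow_le_one ht.1.le (by linarith [ht.2]) (by positivity)
    have hGmem : MemLp (fun t : ℝ => t ^ (1/q : ℝ) * |g t|) (ENNReal.ofReal q)
        (volume.restrict (Set.Ioc (0:ℝ) (1/2 : ℝ))) := by
      refine MemLp.of_bound hmG.aestronglyMeasurable M ?_
      refine (ae_restrict_iff' measurableSet_Ioc).2 (Filter.Eventually.of_forall fun t ht => ?_)
      rw [Real.norm_eq_abs, abs_mul, abs_of_nonneg (Real.rpow_nonneg ht.1.le _), abs_abs]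
      have h1 : t ^ (1/q : ℝ) ≤ 1 := Real.rpow_le_one ht.1.le (by linarith [ht.2]) hsq0
      nlinarith [hgM t ht, abs_nonneg (g t), Real.rpow_nonneg ht.1.le (1/q : ℝ), hM0]
    have hold := MeasureTheory.integral_mul_le_Lp_mul_Lq_of_nonneg hpq haeF haeG hFmem hGmem
    have hFG : ∫ t in Set.Ioc (0:ℝ) (1/2 : ℝ), t ^ (1/p : ℝ) * (t ^ (1/q : ℝ) * |g t|) =
        ∫ t in Set.Ioc (0:ℝ) (1/2 : ℝ), t * |g t| := by
      refine setIntegral_congr_fun measurableSet_Ioc fun t ht => ?_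
      rw [← mul_assoc, ← Real.rpow_add ht.1, hsum1, Real.rpow_one]
    have hFp : ∫ t in Set.Ioc (0:ℝ) (1/2 : ℝ), (t ^ (1/p : ℝ)) ^ p = 1/8 := by
      have h1 : ∫ t in Set.Ioc (0:ℝ) (1/2 : ℝ), (t ^ (1/p : ℝ)) ^ p =
          ∫ t in Set.Ioc (0:ℝ) (1/2 : ℝ), t := by
        refine setIntegral_congr_fun measurableSet_Ioc fun t ht => ?_
        rw [← Real.rpow_mul ht.1.le, one_div_mul_cancel hp0.ne', Real.rpow_one]
      rw [h1, ← intervalIntegral.integral_of_le (by norm_num : (0:ℝ) ≤ 1/2)]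
      norm_num [integral_id]
    have hGq : ∫ t in Set.Ioc (0:ℝ) (1/2 : ℝ), (t ^ (1/q : ℝ) * |g t|) ^ q ≤
        A ^ q / 12 + B ^ q / 24 := by
      have h1 : ∫ t in Set.Ioc (0:ℝ) (1/2 : ℝ), (t ^ (1/q : ℝ) * |g t|) ^ q =
          ∫ t in Set.Ioc (0:ℝ) (1/2 : ℝ), t * |g t| ^ q := by
        refine setIntegral_congr_fun measurableSet_Ioc fun t ht => ?_
        rw [Real.mul_rpow (Real.rpow_nonneg ht.1.le _) (abs_nonneg _),
          ← Real.rpow_mul ht.1.le, one_div_mul_cancel hq0', Real.rpow_one]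
      rw [h1, ← poly_int (A ^ q) (B ^ q)]
      refine setIntegral_mono_on ?_ (Continuous.integrableOn_Ioc (by fun_prop))
        measurableSet_Ioc fun t ht => mul_le_mul_of_nonneg_left (hbound t ht) ht.1.le
      refine integrableOn_Ioc_of_bound (measurable_id.mul (by fun_prop))
        (C := A ^ q + B ^ q) fun t ht => ?_
      have h2 := hbound t ht
      have h3 : (0:ℝ) ≤ |g t| ^ q := Real.rpow_nonneg (abs_nonneg _) _
      rw [abs_mul, abs_of_pos ht.1, abs_of_nonneg h3]
      nlinarith [mul_nonneg ht.1.le hAq,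
        mul_nonneg (by linarith [ht.2] : (0:ℝ) ≤ 1 - t) hBq,
        mul_nonneg (by linarith [ht.2] : (0:ℝ) ≤ 1 - t) h3]
    rw [hFG, hFp] at hold
    have hGq0 : 0 ≤ ∫ t in Set.Ioc (0:ℝ) (1/2 : ℝ), (t ^ (1/q : ℝ) * |g t|) ^ q :=
      setIntegral_nonneg measurableSet_Ioc fun t ht =>
        Real.rpow_nonneg (mul_nonneg (Real.rpow_nonneg ht.1.le _) (abs_nonneg _)) _
    have h2 : (∫ t in Set.Ioc (0:ℝ) (1/2 : ℝ), (t ^ (1/q : ℝ) * |g t|) ^ q) ^ (1/q : ℝ) ≤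
        (A ^ q / 12 + B ^ q / 24) ^ (1/q : ℝ) := Real.rpow_le_rpow hGq0 hGq hsq0
    have h3 : ∫ t in Set.Ioc (0:ℝ) (1/2 : ℝ), t * |g t| ≤
        ((1:ℝ)/8) ^ (1/p : ℝ) * (A ^ q / 12 + B ^ q / 24) ^ (1/q : ℝ) :=
      hold.trans (mul_le_mul_of_nonneg_left h2 (by positivity))
    refine h3.trans ?_
    have hApow : (A ^ q) ^ (1/q : ℝ) = A := by
      rw [← Real.rpow_mul hA, mul_one_div_cancel hq0', Real.rpow_one]
    have hBpow : (B ^ q) ^ (1/q : ℝ) = B := by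
      rw [← Real.rpow_mul hB, mul_one_div_cancel hq0', Real.rpow_one]
    have h24 : ((1:ℝ)/24) ^ (1/q : ℝ) = ((1:ℝ)/8) ^ (1/q : ℝ) * ((1:ℝ)/3) ^ (1/q : ℝ) := by
      rw [← Real.mul_rpow (by norm_num) (by norm_num)]
      norm_num
    have h8 : ((1:ℝ)/8) ^ (1/p : ℝ) * ((1:ℝ)/8) ^ (1/q : ℝ) = 1/8 := by
      rw [← Real.rpow_add (by norm_num : (0:ℝ) < 1/8), hsum1, Real.rpow_one]
    have h13 : ((1:ℝ)/3) ^ (1/q : ℝ) = ((3:ℝ) ^ (1/q : ℝ))⁻¹ := by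
      rw [one_div, Real.inv_rpow (by norm_num)]
    have hconst : ((1:ℝ)/8) ^ (1/p : ℝ) * ((1:ℝ)/24) ^ (1/q : ℝ) =
        1/8 * ((3:ℝ) ^ (1/q : ℝ))⁻¹ := by
      rw [h24, ← mul_assoc, h8, h13]
    have hsplit : A ^ q / 12 + B ^ q / 24 = (1/24) * (2 * A ^ q + B ^ q) := by ring
    calc ((1:ℝ)/8) ^ (1/p : ℝ) * (A ^ q / 12 + B ^ q / 24) ^ (1/q : ℝ)
        = ((1:ℝ)/8) ^ (1/p : ℝ) *
            (((1:ℝ)/24) ^ (1/q : ℝ) * (2 * A ^ q + B ^ q) ^ (1/q : ℝ)) := by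
          rw [hsplit, Real.mul_rpow (by norm_num) (by positivity)]
      _ ≤ ((1:ℝ)/8) ^ (1/p : ℝ) *
            (((1:ℝ)/24) ^ (1/q : ℝ) * ((2 * A ^ q) ^ (1/q : ℝ) + (B ^ q) ^ (1/q : ℝ))) := by
          gcongr
          exact rpow_add_le_add_rpow_real (by positivity) hBq hsq0 hsq1
      _ = (((1:ℝ)/8) ^ (1/p : ℝ) * ((1:ℝ)/24) ^ (1/q : ℝ)) *
            ((2:ℝ) ^ (1/q : ℝ) * A + B) := by
          rw [Real.mul_rpow (by norm_num) hAq, hApow, hBpow]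
          ring
      _ = 1 / 8 * ((2:ℝ) ^ (1/q) * A + B) / (3:ℝ) ^ (1/q) := by
          rw [hconst, div_eq_mul_inv]
          ring

theorem hh_left_preinvex_q_pow_deriv_simplified
    (K : Set ℝ) (hK : IsOpen K) (η : ℝ → ℝ → ℝ)
    (f f' : ℝ → ℝ) (a b : ℝ) (q : ℝ) (hq : 1 ≤ q)
    (hinvex : ∀ t ∈ Set.Icc (0 : ℝ) 1, a + t * η b a ∈ K)
    (hf : ∀ x ∈ K, HasDerivAt f (f' x) x)
    (hη : 0 < η b a)
    (hpre : ∀ t ∈ Set.Icc (0 : ℝ) 1,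
      |f' (a + t * η b a)| ^ q ≤ (1 - t) * |f' a| ^ q + t * |f' b| ^ q) :
    |(1 / η b a) * (∫ x in a..(a + η b a), f x) - f ((2 * a + η b a) / 2)|
      ≤ (η b a / 8) * (((2 : ℝ) ^ (1 / q) + 1) / (3 : ℝ) ^ (1 / q)) *
        (|f' a| + |f' b|) := by
  set r := η b a with hrdef
  have hr0 : r ≠ 0 := ne_of_gt hη
  set g : ℝ → ℝ := fun t => deriv f (a + t * r) with hgdef
  set φ : ℝ → ℝ := fun t => f (a + t * r) with hφdef
  set U : Set ℝ := (fun t : ℝ => a + t * r) ⁻¹' K with hUdef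
  have hUopen : IsOpen U := hK.preimage (by fun_prop)
  have hIccU : Set.Icc (0:ℝ) 1 ⊆ U := fun t ht => hinvex t ht
  have hφd : ∀ t ∈ U, HasDerivAt φ (r * g t) t := by
    intro t ht
    have h1 : HasDerivAt (fun t : ℝ => a + t * r) (1 * r) t :=
      ((hasDerivAt_id t).mul_const r).const_add a
    have h2 : HasDerivAt f (f' (a + t * r)) (a + t * r) := hf _ ht
    have h3 : deriv f (a + t * r) = f' (a + t * r) := h2.deriv
    have h4 := h2.comp t h1
    have h5 : r * g t = f' (a + t * r) * (1 * r) := by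
      simp only [hgdef, h3]; ring
    rw [h5]
    exact h4
  have hg_eq : ∀ t ∈ Set.Icc (0:ℝ) 1, g t = f' (a + t * r) :=
    fun t ht => (hf _ (hinvex t ht)).deriv
  have hgm : Measurable g := (measurable_deriv f).comp (by fun_prop)
  have hφcont : ContinuousOn φ U := fun t ht => (hφd t ht).continuousAt.continuousWithinAt
  have hgb : ∀ t ∈ Set.Icc (0:ℝ) 1, |g t| ^ q ≤ (1 - t) * |f' a| ^ q + t * |f' b| ^ q := by
    intro t ht
    rw [hg_eq t ht]
    exact hpre t ht
  have hq0 : (0:ℝ) < q := lt_of_lt_of_le one_pos hq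
  set M : ℝ := (|f' a| ^ q + |f' b| ^ q) ^ (1/q) with hMdef
  have hM0 : 0 ≤ M := Real.rpow_nonneg (by positivity) _
  have hgM : ∀ t ∈ Set.Icc (0:ℝ) 1, |g t| ≤ M := by
    intro t ht
    refine abs_le_of_rpow_le hq0 (abs_nonneg _) ((hgb t ht).trans ?_)
    nlinarith [mul_nonneg ht.1 (Real.rpow_nonneg (abs_nonneg (f' a)) q),
      mul_nonneg (by linarith [ht.2] : (0:ℝ) ≤ 1 - t) (Real.rpow_nonneg (abs_nonneg (f' b)) q)]
  have h01 : Set.uIcc (0:ℝ) 1 = Set.Icc 0 1 := Set.uIcc_of_le (by norm_num)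
  have hφint : ∀ c d : ℝ, c ∈ Set.Icc (0:ℝ) 1 → d ∈ Set.Icc (0:ℝ) 1 →
      IntervalIntegrable φ volume c d := by
    intro c d hc hd
    apply ContinuousOn.intervalIntegrable
    apply hφcont.mono
    refine (Set.uIcc_subset_uIcc (h01 ▸ hc) (h01 ▸ hd)).trans ?_
    rw [h01]
    exact hIccU
  have hφsm : ∀ t : ℝ, t ∈ U → StronglyMeasurableAtFilter φ (nhds t) volume :=
    fun t ht => ⟨U, hUopen.mem_nhds ht, hφcont.aestronglyMeasurable hUopen.measurableSet⟩
  have hInt1 : ∀ c : ℝ, c ∈ Set.Icc (0:ℝ) 1 → ∀ z ∈ Set.Icc (0:ℝ) 1,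
      HasDerivAt (fun u => ∫ s in c..u, φ s) (φ z) z := by
    intro c hc z hz
    exact intervalIntegral.integral_hasDerivAt_right (hφint c z hc hz)
      (hφsm z (hIccU hz)) (hφd z (hIccU hz)).continuousAt
  have hI1int : IntervalIntegrable (fun t => t * (r * g t)) volume 0 (1/2 : ℝ) := by
    rw [intervalIntegrable_iff_integrableOn_Ioc_of_le (by norm_num)]
    refine integrableOn_Ioc_of_bound (measurable_id.mul (measurable_const.mul hgm))
      (C := r * M) fun t ht => ?_
    have h1 : |g t| ≤ M := hgM t ⟨ht.1.le, by linarith [ht.2]⟩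
    rw [abs_mul, abs_mul, abs_of_pos ht.1, abs_of_pos hη]
    nlinarith [mul_nonneg ht.1.le (mul_nonneg hη.le (sub_nonneg.2 h1)),
      mul_nonneg (by linarith [ht.2] : (0:ℝ) ≤ 1 - t) (mul_nonneg hη.le hM0)]
  have hI2int : IntervalIntegrable (fun t => (t - 1) * (r * g t)) volume (1/2 : ℝ) 1 := by
    rw [intervalIntegrable_iff_integrableOn_Ioc_of_le (by norm_num)]
    refine integrableOn_Ioc_of_bound (((measurable_id.sub measurable_const)).mul
      (measurable_const.mul hgm)) (C := r * M) fun t ht => ?_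
    have h1 : |g t| ≤ M := hgM t ⟨by linarith [ht.1], ht.2⟩
    have h2 : |t - 1| ≤ 1 := by rw [abs_le]; constructor <;> linarith [ht.1, ht.2]
    rw [abs_mul, abs_mul, abs_of_pos hη]
    nlinarith [mul_nonneg (abs_nonneg (t - 1)) (mul_nonneg hη.le (sub_nonneg.2 h1)),
      mul_nonneg (sub_nonneg.2 h2) (mul_nonneg hη.le hM0)]
  have e1 : ∫ t in (0:ℝ)..(1/2 : ℝ), t * (r * g t) =
      (1/2 : ℝ) * φ (1/2) - ∫ s in (0:ℝ)..(1/2 : ℝ), φ s := by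
    have hd : ∀ z ∈ Set.uIcc (0:ℝ) (1/2 : ℝ),
        HasDerivAt (fun t => t * φ t - ∫ s in (0:ℝ)..t, φ s) (z * (r * g z)) z := by
      intro z hz
      rw [Set.uIcc_of_le (by norm_num)] at hz
      have hz' : z ∈ Set.Icc (0:ℝ) 1 := ⟨hz.1, by linarith [hz.2]⟩
      have h1 : HasDerivAt (fun t => t * φ t) (1 * φ z + z * (r * g z)) z :=
        (hasDerivAt_id z).mul (hφd z (hIccU hz'))
      have h2 := hInt1 0 (by norm_num) z hz'
      exact (h1.sub h2).congr_deriv (by ring)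
    have heq := intervalIntegral.integral_eq_sub_of_hasDerivAt hd hI1int
    rw [heq]
    simp
  have e2 : ∫ t in (1/2 : ℝ)..1, (t - 1) * (r * g t) =
      (1/2 : ℝ) * φ (1/2) - ∫ s in (1/2 : ℝ)..1, φ s := by
    have hd : ∀ z ∈ Set.uIcc (1/2 : ℝ) 1,
        HasDerivAt (fun t => (t - 1) * φ t - ∫ s in (1/2 : ℝ)..t, φ s)
          ((z - 1) * (r * g z)) z := by
      intro z hz
      rw [Set.uIcc_of_le (by norm_num)] at hz
      have hz' : z ∈ Set.Icc (0:ℝ) 1 := ⟨by linarith [hz.1], hz.2⟩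
      have h1 : HasDerivAt (fun t => (t - 1) * φ t) (1 * φ z + (z - 1) * (r * g z)) z :=
        ((hasDerivAt_id z).sub_const 1).mul (hφd z (hIccU hz'))
      have h2 := hInt1 (1/2 : ℝ) (by norm_num) z hz'
      exact (h1.sub h2).congr_deriv (by ring)
    have heq := intervalIntegral.integral_eq_sub_of_hasDerivAt hd hI2int
    rw [heq]
    simp
    ring
  have esub : ∫ t in (0:ℝ)..1, φ t = r⁻¹ * ∫ x in a..(a + r), f x := by
    have h1 := intervalIntegral.integral_comp_mul_right (a := 0) (b := 1)
      (fun y => f (a + y)) hr0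
    simp only [zero_mul, one_mul, smul_eq_mul] at h1
    have h2 := intervalIntegral.integral_comp_add_left (a := 0) (b := r) f a
    rw [add_zero] at h2
    rw [hφdef]
    rw [h1, h2]
  have hsum : (∫ t in (0:ℝ)..(1/2 : ℝ), t * (r * g t)) +
      (∫ t in (1/2 : ℝ)..1, (t - 1) * (r * g t)) = φ (1/2) - ∫ t in (0:ℝ)..1, φ t := by
    rw [e1, e2]
    have h3 : (∫ s in (0:ℝ)..(1/2 : ℝ), φ s) + ∫ s in (1/2 : ℝ)..1, φ s =
        ∫ s in (0:ℝ)..1, φ s :=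
      intervalIntegral.integral_add_adjacent_intervals
        (hφint 0 (1/2) (by norm_num) (by norm_num)) (hφint (1/2) 1 (by norm_num) (by norm_num))
    linarith
  have hmid : f ((2 * a + r) / 2) = φ (1/2 : ℝ) := by
    rw [hφdef]
    norm_num
    ring_nf
  have hL : (1 / r) * (∫ x in a..(a + r), f x) - f ((2 * a + r) / 2) =
      -((∫ t in (0:ℝ)..(1/2 : ℝ), t * (r * g t)) +
        (∫ t in (1/2 : ℝ)..1, (t - 1) * (r * g t))) := by
    rw [hsum, hmid, one_div, ← esub]
    ring
  rw [hL, abs_neg]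
  have hb1 : |∫ t in (0:ℝ)..(1/2 : ℝ), t * (r * g t)| ≤
      r * (1 / 8 * ((2:ℝ) ^ (1/q) * |f' a| + |f' b|) / (3:ℝ) ^ (1/q)) := by
    refine (intervalIntegral.abs_integral_le_integral_abs (by norm_num)).trans ?_
    rw [intervalIntegral.integral_of_le (by norm_num)]
    have h1 : ∫ t in Set.Ioc (0:ℝ) (1/2 : ℝ), |t * (r * g t)| =
        ∫ t in Set.Ioc (0:ℝ) (1/2 : ℝ), r * (t * |g t|) := by
      refine setIntegral_congr_fun measurableSet_Ioc fun t ht => ?_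
      rw [abs_mul, abs_mul, abs_of_pos ht.1, abs_of_pos hη]
      ring
    rw [h1, MeasureTheory.integral_const_mul]
    refine mul_le_mul_of_nonneg_left ?_ hη.le
    exact key_half hgm hq (abs_nonneg _) (abs_nonneg _)
      (fun t ht => hgb t ⟨ht.1.le, by linarith [ht.2]⟩)
  have hb2 : |∫ t in (1/2 : ℝ)..1, (t - 1) * (r * g t)| ≤
      r * (1 / 8 * ((2:ℝ) ^ (1/q) * |f' b| + |f' a|) / (3:ℝ) ^ (1/q)) := by
    refine (intervalIntegral.abs_integral_le_integral_abs (by norm_num)).trans ?_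
    have hsub : ∫ t in (1/2 : ℝ)..1, |(t - 1) * (r * g t)| =
        ∫ u in (0:ℝ)..(1/2 : ℝ), |u * (r * g (1 - u))| := by
      have h := intervalIntegral.integral_comp_sub_left (a := (1/2 : ℝ)) (b := 1)
        (fun u => |((1 - u) - 1) * (r * g (1 - u))|) 1
      simp only [sub_sub_cancel] at h
      norm_num at h
      simpa only [abs_mul] using h
    rw [hsub, intervalIntegral.integral_of_le (by norm_num)]
    have h1 : ∫ u in Set.Ioc (0:ℝ) (1/2 : ℝ), |u * (r * g (1 - u))| =
        ∫ u in Set.Ioc (0:ℝ) (1/2 : ℝ), r * (u * |g (1 - u)|) := by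
      refine setIntegral_congr_fun measurableSet_Ioc fun u hu => ?_
      rw [abs_mul, abs_mul, abs_of_pos hu.1, abs_of_pos hη]
      ring
    rw [h1, MeasureTheory.integral_const_mul]
    refine mul_le_mul_of_nonneg_left ?_ hη.le
    refine key_half (g := fun u => g (1 - u)) (hgm.comp (by fun_prop)) hq
      (abs_nonneg (f' b)) (abs_nonneg (f' a)) fun u hu => ?_
    have h2 := hgb (1 - u) ⟨by linarith [hu.2], by linarith [hu.1.le]⟩
    calc |g (1 - u)| ^ q ≤ (1 - (1 - u)) * |f' a| ^ q + (1 - u) * |f' b| ^ q := h2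
      _ = (1 - u) * |f' b| ^ q + u * |f' a| ^ q := by ring
  calc |(∫ t in (0:ℝ)..(1/2 : ℝ), t * (r * g t)) +
        (∫ t in (1/2 : ℝ)..1, (t - 1) * (r * g t))|
      ≤ |∫ t in (0:ℝ)..(1/2 : ℝ), t * (r * g t)| +
        |∫ t in (1/2 : ℝ)..1, (t - 1) * (r * g t)| := abs_add_le _ _
    _ ≤ r * (1 / 8 * ((2:ℝ) ^ (1/q) * |f' a| + |f' b|) / (3:ℝ) ^ (1/q)) +
        r * (1 / 8 * ((2:ℝ) ^ (1/q) * |f' b| + |f' a|) / (3:ℝ) ^ (1/q)) := add_le_add hb1 hb2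
    _ = (r / 8) * (((2:ℝ) ^ (1/q) + 1) / (3:ℝ) ^ (1/q)) * (|f' a| + |f' b|) := by ring
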